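/- Let f₁,…,f_m, g : ℝⁿ → ℝ be Borel measurable, S ⊆ ℝⁿ, φ ∈ ℝᵐ, and suppose σ₋ = inf{z : (φ,z) ∈ γ(S,φ)} is finite. Then there exist α ∈ ℝᵐ, β ≥ 0 and c ∈ ℝ with (α,β) ≠ 0 such that ⟨α, f(x)⟩ + β·g(x) + c ≥ 0 for all x ∈ S, and the infimum over μ ∈ M(S,φ) of E_μ[⟨α, f(X)⟩ + β·g(X) + c] equals 0. -/

import Mathlib

open MeasureTheory Set Filter Topology
open scoped BigOperators ENNReal

noncomputable section

/-- The support of a measure: points all of whose open neighborhoods have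
positive measure. -/
def msupport {E : Type*} [TopologicalSpace E] [MeasurableSpace E]
    (μ : Measure E) : Set E :=
  {x | ∀ U : Set E, IsOpen U → x ∈ U → μ U ≠ 0}

/-- `M(S,φ)`: Borel probability measures with support contained in `S`,
with `E[f i] = φ i` for all `i` and `E[g]` finite. -/
def MC (n m : ℕ) (f : (Fin n → ℝ) → Fin m → ℝ) (g : (Fin n → ℝ) → ℝ)
    (S : Set (Fin n → ℝ)) (φ : Fin m → ℝ) : Set (Measure (Fin n → ℝ)) :=
  {μ | IsProbabilityMeasure μ ∧ msupport μ ⊆ S ∧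
    (∀ i, Integrable (fun x => f x i) μ) ∧ (∀ i, ∫ x, f x i ∂μ = φ i) ∧
    Integrable g μ}

/-- `γ(S,φ)`: intersection of the convex hull of `Γ(S)` with the line `{φ} × ℝ`,
where `Γ x = (f x, g x) ∈ ℝ^m × ℝ`. -/
def gam (n m : ℕ) (f : (Fin n → ℝ) → Fin m → ℝ) (g : (Fin n → ℝ) → ℝ)
    (S : Set (Fin n → ℝ)) (φ : Fin m → ℝ) : Set ((Fin m → ℝ) × ℝ) :=
  convexHull ℝ ((fun x => (f x, g x)) '' S) ∩ {p | p.1 = φ}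

/-- The complement of `msupport` is null (in a second countable space). -/
lemma msupport_compl_null {E : Type*} [TopologicalSpace E] [SecondCountableTopology E]
    [MeasurableSpace E] (μ : Measure E) :
    μ (msupport μ)ᶜ = 0 := by
  set 𝒰 : Set (Set E) := {U | IsOpen U ∧ μ U = 0} with h𝒰
  obtain ⟨T, hTc, hTsub, hTU⟩ := TopologicalSpace.isOpen_sUnion_countable 𝒰 (fun s hs => hs.1)
  have hU0 : μ (⋃₀ 𝒰) = 0 := by
    rw [← hTU]
    exact (measure_sUnion_null_iff hTc).2 (fun s hs => (hTsub hs).2)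
  refine measure_mono_null ?_ hU0
  intro x hx
  simp only [msupport, mem_compl_iff, mem_setOf_eq, not_forall] at hx
  obtain ⟨U, hUo, hxU, hU⟩ := hx
  exact ⟨U, ⟨hUo, by simpa using hU⟩, hxU⟩

lemma integrable_dirac_meas {α : Type*} [MeasurableSpace α] [MeasurableSingletonClass α]
    {h : α → ℝ} (hm : Measurable h) (a : α) : Integrable h (Measure.dirac a) := by
  refine ⟨hm.aestronglyMeasurable, ?_⟩
  simp only [HasFiniteIntegral, lintegral_dirac]
  exact ENNReal.coe_lt_top

/-- Any point of the convex hull of `Γ(S)` is realized by a finitely supported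
probability measure on `S`. -/
lemma exists_measure {n m : ℕ}
    (f : (Fin n → ℝ) → Fin m → ℝ) (g : (Fin n → ℝ) → ℝ)
    (hf : ∀ i, Measurable fun x => f x i) (hg : Measurable g)
    (S : Set (Fin n → ℝ)) (p : (Fin m → ℝ) × ℝ)
    (hp : p ∈ convexHull ℝ ((fun x => (f x, g x)) '' S)) :
    ∃ μ : Measure (Fin n → ℝ), IsProbabilityMeasure μ ∧ msupport μ ⊆ S ∧
      (∀ i, Integrable (fun x => f x i) μ) ∧ (∀ i, ∫ x, f x i ∂μ = p.1 i) ∧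
      Integrable g μ ∧ ∫ x, g x ∂μ = p.2 := by
  rw [convexHull_eq] at hp
  obtain ⟨ι, t, w, z, hw0, hw1, hzS, hcm⟩ := hp
  have key : ∀ i : ι, ∃ x : Fin n → ℝ, i ∈ t → x ∈ S ∧ (f x, g x) = z i := by
    intro i
    by_cases hi : i ∈ t
    · obtain ⟨x, hxS, hxz⟩ := hzS i hi
      exact ⟨x, fun _ => ⟨hxS, hxz⟩⟩
    · exact ⟨0, fun h => absurd h hi⟩
  choose x hx using key
  have hps : p = ∑ i ∈ t, w i • z i := by
    rw [← hcm, Finset.centerMass_eq_of_sum_1 _ _ hw1]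
  set μ : Measure (Fin n → ℝ) := ∑ i ∈ t, ENNReal.ofReal (w i) • Measure.dirac (x i) with hμ
  have hint : ∀ (h : (Fin n → ℝ) → ℝ), Measurable h → Integrable h μ := by
    intro h hm
    rw [hμ, integrable_finset_sum_measure]
    exact fun i _ => (integrable_dirac_meas hm (x i)).smul_measure ENNReal.ofReal_ne_top
  have hintg : ∀ (h : (Fin n → ℝ) → ℝ), Measurable h →
      ∫ y, h y ∂μ = ∑ i ∈ t, w i * h (x i) := by
    intro h hm
    rw [hμ, integral_finset_sum_measure (fun i _ =>
      (integrable_dirac_meas hm (x i)).smul_measure ENNReal.ofReal_ne_top)]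
    refine Finset.sum_congr rfl fun i hi => ?_
    rw [integral_smul_measure, integral_dirac, ENNReal.toReal_ofReal (hw0 i hi), smul_eq_mul]
  have happ : ∀ (A : Set (Fin n → ℝ)),
      μ A = ∑ i ∈ t, ENNReal.ofReal (w i) * Measure.dirac (x i) A := by
    intro A
    rw [hμ, Measure.coe_finset_sum]
    simp [Finset.sum_apply]
  have hprob : IsProbabilityMeasure μ := by
    refine ⟨?_⟩
    rw [happ]
    simp only [measure_univ, mul_one]
    rw [← ENNReal.ofReal_sum_of_nonneg hw0, hw1, ENNReal.ofReal_one]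
  refine ⟨μ, hprob, ?_, fun i => hint _ (hf i), fun i => ?_, hint _ hg, ?_⟩
  · intro y hy
    by_contra hyS
    refine hy ((↑(t.image x) : Set (Fin n → ℝ))ᶜ) ?_ ?_ ?_
    · exact (Set.Finite.isClosed (t.image x).finite_toSet).isOpen_compl
    · simp only [mem_compl_iff, Finset.coe_image, mem_image, Finset.mem_coe, not_exists]
      rintro i ⟨hi, rfl⟩
      exact hyS (hx i hi).1
    · rw [happ]
      refine Finset.sum_eq_zero fun i hi => ?_
      rw [Measure.dirac_apply]
      have : x i ∈ (↑(t.image x) : Set (Fin n → ℝ)) := by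
        simp only [Finset.coe_image, mem_image, Finset.mem_coe]
        exact ⟨i, hi, rfl⟩
      rw [Set.indicator_of_notMem (by simpa using this), mul_zero]
  · rw [hintg _ (hf i), hps, Prod.fst_sum, Finset.sum_apply]
    refine Finset.sum_congr rfl fun j hj => ?_
    rw [Prod.smul_fst, Pi.smul_apply, ← (hx j hj).2, smul_eq_mul]
  · rw [hintg _ hg, hps, Prod.snd_sum]
    refine Finset.sum_congr rfl fun j hj => ?_
    rw [Prod.smul_snd, ← (hx j hj).2, smul_eq_mul]

/-- Supporting functional for a convex set at a point of its closure that is not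
in its interior (finite dimensions). -/
lemma sep_lemma {E : Type*} [NormedAddCommGroup E] [NormedSpace ℝ E] [FiniteDimensional ℝ E]
    {D : Set E} (hD : Convex ℝ D) (hne : D.Nonempty) {q : E}
    (hq : q ∉ interior D) (hqcl : q ∈ closure D) :
    ∃ f : E →L[ℝ] ℝ, f ≠ 0 ∧ ∀ p ∈ D, f p ≤ f q := by
  by_cases hi : (interior D).Nonempty
  · obtain ⟨f, hfs⟩ := geometric_hahn_banach_open_point hD.interior isOpen_interior hq
    obtain ⟨w, hw⟩ := hi
    refine ⟨f, ?_, ?_⟩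
    · intro h0
      have := hfs w hw
      rw [h0] at this
      simp at this
    · intro p hp
      by_contra hlt
      push_neg at hlt
      set δ := f p - f q with hδ
      set M := f p - f w with hM
      have hδ0 : 0 < δ := by simp [hδ]; linarith
      have hM0 : 0 < M := by
        have := hfs w hw
        simp [hM]; linarith
      set b := δ / (2 * M) with hb
      have hb0 : 0 < b := by positivity
      have hwq : f w < f q := hfs w hw
      have hb1 : b < 1 := by
        rw [hb, div_lt_one (by positivity)]
        simp only [hδ, hM]
        linarith
      have hcombo := hD.combo_self_interior_mem_interior hp hw
        (by linarith : (0:ℝ) ≤ 1 - b) hb0 (by ring)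
      have hval := hfs _ hcombo
      rw [map_add, _root_.map_smul, _root_.map_smul] at hval
      simp only [smul_eq_mul] at hval
      have hbM : b * M = δ / 2 := by
        rw [hb]; field_simp
      nlinarith [hbM]
  · rw [not_nonempty_iff_eq_empty] at hi
    have hspan : affineSpan ℝ D ≠ ⊤ := by
      intro h
      rw [← hD.interior_nonempty_iff_affineSpan_eq_top] at h
      rw [hi] at h
      exact not_nonempty_empty h
    obtain ⟨p₀, hp₀⟩ := hne
    set V := (affineSpan ℝ D).direction with hV
    have hVne : V ≠ ⊤ := by
      intro h
      exact hspan ((AffineSubspace.direction_eq_top_iff_of_nonempty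
        ((affineSpan_nonempty (k := ℝ)).2 ⟨p₀, hp₀⟩)).1 h)
    obtain ⟨v, hv⟩ : ∃ v : E, v ∉ V := by
      by_contra h
      push_neg at h
      exact hVne (Submodule.eq_top_iff'.2 h)
    obtain ⟨f, u, hfV, hfv⟩ := geometric_hahn_banach_closed_point
      V.convex V.closed_of_finiteDimensional hv
    have hf0V : ∀ w ∈ V, f w = 0 := by
      intro w hw
      by_contra hfw
      have ht : ∀ t : ℝ, t * f w < u := by
        intro t
        have : (t • w : E) ∈ (V : Set E) := V.smul_mem t hw
        simpa using hfV _ this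
      have := ht ((u + 1) / f w)
      rw [div_mul_cancel₀ _ hfw] at this
      linarith
    have hfne : f ≠ 0 := by
      intro h0
      have h1 : f 0 < u := hfV 0 V.zero_mem
      rw [map_zero] at h1
      rw [h0] at hfv
      simp at hfv
      linarith
    have hconst : ∀ p ∈ D, f p = f p₀ := by
      intro p hp
      have : p - p₀ ∈ V := AffineSubspace.vsub_mem_direction
        (subset_affineSpan ℝ D hp) (subset_affineSpan ℝ D hp₀)
      have := hf0V _ this
      rw [map_sub] at this
      linarith
    have hq0 : f q = f p₀ := by
      have h1 : f q ∈ closure (f '' D) :=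
        (image_closure_subset_closure_image f.continuous) ⟨q, hqcl, rfl⟩
      have h2 : f '' D ⊆ {f p₀} := by
        rintro _ ⟨p, hp, rfl⟩
        exact hconst p hp
      have h3 : closure (f '' D) ⊆ {f p₀} := by
        rw [← closure_singleton (x := f p₀)]
        exact closure_mono h2
      exact h3 h1
    exact ⟨f, hfne, fun p hp => by rw [hconst p hp, hq0]⟩

/-- supporting-hyperplane theorem, infimum case. -/
theorem supporting_hyperplane_inf {n m : ℕ}
    (f : (Fin n → ℝ) → Fin m → ℝ) (g : (Fin n → ℝ) → ℝ)
    (hf : ∀ i, Measurable fun x => f x i) (hg : Measurable g)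
    (S : Set (Fin n → ℝ)) (φ : Fin m → ℝ) (σm : ℝ)
    (hσ : (⨅ p ∈ gam n m f g S φ, ((p.2 : ℝ) : EReal)) = (σm : EReal)) :
    ∃ (α : Fin m → ℝ) (β c : ℝ), 0 ≤ β ∧
      ((α, β) : (Fin m → ℝ) × ℝ) ≠ 0 ∧
      (∀ x ∈ S, 0 ≤ (∑ i, α i * f x i) + β * g x + c) ∧
      (⨅ μ ∈ MC n m f g S φ,
        ((∫ x, ((∑ i, α i * f x i) + β * g x + c) ∂μ : ℝ) : EReal)) = 0 := by
  classical
  set C : Set ((Fin m → ℝ) × ℝ) := convexHull ℝ ((fun x => (f x, g x)) '' S) with hC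
  set G : Set ((Fin m → ℝ) × ℝ) := gam n m f g S φ with hG
  -- Facts from hσ
  have hGne : G.Nonempty := by
    by_contra h
    rw [not_nonempty_iff_eq_empty] at h
    rw [h] at hσ
    simp only [mem_empty_iff_false, not_false_eq_true, iInf_neg, iInf_top] at hσ
    exact (EReal.coe_ne_top σm) hσ.symm
  have hlb : ∀ p ∈ G, σm ≤ p.2 := by
    intro p hp
    have h1 : (⨅ p ∈ gam n m f g S φ, ((p.2 : ℝ) : EReal)) ≤ ((p.2 : ℝ) : EReal) :=
      iInf₂_le p hp
    rw [hσ] at h1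
    exact EReal.coe_le_coe_iff.1 h1
  have happrox : ∀ ε : ℝ, 0 < ε → ∃ p ∈ G, p.2 < σm + ε := by
    intro ε hε
    by_contra h
    push_neg at h
    have h1 : ((σm + ε : ℝ) : EReal) ≤ ⨅ p ∈ gam n m f g S φ, ((p.2 : ℝ) : EReal) :=
      le_iInf₂ fun p hp => EReal.coe_le_coe_iff.2 (h p hp)
    rw [hσ] at h1
    have := EReal.coe_le_coe_iff.1 h1
    linarith
  -- The convex set D
  have hCconv : Convex ℝ C := convex_convexHull ℝ _
  set D : Set ((Fin m → ℝ) × ℝ) := {p | ∃ z', z' ≤ p.2 ∧ (p.1, z') ∈ C} with hD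
  have hCD : C ⊆ D := fun p hp => ⟨p.2, le_refl _, by simpa⟩
  have hDconv : Convex ℝ D := by
    rintro p hp r hr a b ha hb hab
    obtain ⟨zp, hzp1, hzp2⟩ := hp
    obtain ⟨zr, hzr1, hzr2⟩ := hr
    refine ⟨a * zp + b * zr, ?_, ?_⟩
    · have : (a • p + b • r).2 = a * p.2 + b * r.2 := rfl
      rw [this]
      have h1 : a * zp ≤ a * p.2 := mul_le_mul_of_nonneg_left hzp1 ha
      have h2 : b * zr ≤ b * r.2 := mul_le_mul_of_nonneg_left hzr1 hb
      linarith
    · have := hCconv hzp2 hzr2 ha hb hab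
      have heq : a • ((p.1 : Fin m → ℝ), zp) + b • (r.1, zr) =
          ((a • p + b • r).1, a * zp + b * zr) := by
        ext <;> simp [Prod.smul_def]
      rwa [heq] at this
  have hDne : D.Nonempty := by
    obtain ⟨p, hp⟩ := hGne
    exact ⟨p, hCD hp.1⟩
  set q : (Fin m → ℝ) × ℝ := (φ, σm) with hq
  have hqD : q ∉ interior D := by
    intro h
    rw [mem_interior_iff_mem_nhds, Metric.mem_nhds_iff] at h
    obtain ⟨ε, hε, hball⟩ := h
    have hr : ((φ, σm - ε / 2) : (Fin m → ℝ) × ℝ) ∈ Metric.ball q ε := by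
      rw [Metric.mem_ball, Prod.dist_eq]
      have h1 : dist ((φ, σm - ε / 2) : (Fin m → ℝ) × ℝ).1 q.1 = 0 := by simp [hq]
      have h2 : dist ((φ, σm - ε / 2) : (Fin m → ℝ) × ℝ).2 q.2 = ε / 2 := by
        simp only [hq, Real.dist_eq]
        rw [show σm - ε / 2 - σm = -(ε/2) by ring, abs_neg, abs_of_pos (by linarith)]
      rw [h1, h2]
      simp only [max_def]
      split <;> linarith
    obtain ⟨z', hz1, hz2⟩ := hball hr
    have hzG : ((φ, z') : (Fin m → ℝ) × ℝ) ∈ G := ⟨hz2, rfl⟩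
    have := hlb _ hzG
    simp only at this hz1
    linarith
  have hqcl : q ∈ closure D := by
    rw [Metric.mem_closure_iff]
    intro ε hε
    obtain ⟨p, hpG, hp2⟩ := happrox (ε / 2) (by linarith)
    refine ⟨p, hCD hpG.1, ?_⟩
    have hp1 : p.1 = φ := hpG.2
    have hlbp := hlb p hpG
    rw [Prod.dist_eq, hq]
    simp only [hp1, dist_self]
    rw [Real.dist_eq, abs_of_nonpos (by linarith)]
    simp only [max_def]
    split <;> linarith
  -- Separation
  obtain ⟨F, hFne, hFle⟩ := sep_lemma hDconv hDne hqD hqcl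
  -- Coordinates of F
  set a : Fin m → ℝ := fun i => F ((fun j => if i = j then 1 else 0 : Fin m → ℝ), (0:ℝ)) with ha
  set b : ℝ := F ((0 : Fin m → ℝ), 1) with hb
  have hrep : ∀ (y : Fin m → ℝ) (z : ℝ), F (y, z) = (∑ i, y i * a i) + z * b := by
    intro y z
    have hsplit : ((y, z) : (Fin m → ℝ) × ℝ) = (y, 0) + (0, z) := by ext <;> simp
    rw [hsplit, map_add]
    congr 1
    · have := LinearMap.pi_apply_eq_sum_univ
        ((F : ((Fin m → ℝ) × ℝ) →ₗ[ℝ] ℝ).comp (LinearMap.inl ℝ (Fin m → ℝ) ℝ)) y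
      simp only [LinearMap.comp_apply, LinearMap.inl_apply] at this
      rw [show F ((y : Fin m → ℝ), (0:ℝ)) = (F : ((Fin m → ℝ) × ℝ) →ₗ[ℝ] ℝ) (y, 0) from rfl, this]
      refine Finset.sum_congr rfl fun i _ => ?_
      rw [smul_eq_mul]
      congr 1
    · have : ((0 : Fin m → ℝ), z) = z • ((0 : Fin m → ℝ), (1:ℝ)) := by ext <;> simp
      rw [this, _root_.map_smul, smul_eq_mul, hb]
  -- The candidate coefficients
  set α : Fin m → ℝ := fun i => -(a i) with hα
  set β : ℝ := -b with hβdef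
  set c : ℝ := F q with hc
  have hsum : ∀ (y : Fin m → ℝ), (∑ i, α i * y i) = -∑ i, y i * a i := by
    intro y
    rw [← Finset.sum_neg_distrib]
    exact Finset.sum_congr rfl fun i _ => by rw [hα]; ring
  have hcval : c = (∑ i, φ i * a i) + σm * b := by rw [hc, hq, hrep]
  -- β ≥ 0
  have hβ : 0 ≤ β := by
    obtain ⟨p₀, hp₀G⟩ := hGne
    have hp₀D : p₀ ∈ D := hCD hp₀G.1
    by_contra hβneg
    push_neg at hβneg
    have hbpos : 0 < b := by rw [hβdef] at hβneg; linarith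
    set T : ℝ := max ((F q - F p₀ + 1) / b) 0 with hT
    have hTD : ((p₀.1, p₀.2 + T) : (Fin m → ℝ) × ℝ) ∈ D := by
      obtain ⟨z', hz1, hz2⟩ := hp₀D
      exact ⟨z', by simp only; linarith [le_max_right ((F q - F p₀ + 1) / b) 0], hz2⟩
    have hle := hFle _ hTD
    have h1 : F ((p₀.1, p₀.2 + T) : (Fin m → ℝ) × ℝ) = F p₀ + T * b := by
      rw [hrep, show F p₀ = F (p₀.1, p₀.2) by rw [Prod.mk.eta], hrep]
      ring
    have h2 : (F q - F p₀ + 1) / b ≤ T := le_max_left _ _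
    have h3 : F q - F p₀ + 1 ≤ T * b := by
      rw [div_le_iff₀ hbpos] at h2
      linarith
    rw [h1] at hle
    linarith
  -- nonzero
  have hαβne : ((α, β) : (Fin m → ℝ) × ℝ) ≠ 0 := by
    intro h
    have h1 : α = 0 := congrArg Prod.fst h
    have h2 : β = 0 := congrArg Prod.snd h
    apply hFne
    have ha0 : ∀ i, a i = 0 := by
      intro i
      have h3 := congrFun h1 i
      simp only [hα, Pi.zero_apply] at h3
      linarith
    have hb0 : b = 0 := by
      rw [hβdef] at h2
      linarith
    refine ContinuousLinearMap.ext fun p => ?_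
    have hpe : F p = F (p.1, p.2) := by rw [Prod.mk.eta]
    rw [hpe, hrep]
    simp [ha0, hb0]
  -- pointwise nonnegativity
  have hpos : ∀ x ∈ S, 0 ≤ (∑ i, α i * f x i) + β * g x + c := by
    intro x hx
    have hΓC : ((f x, g x) : (Fin m → ℝ) × ℝ) ∈ C := subset_convexHull ℝ _ ⟨x, hx, rfl⟩
    have := hFle _ (hCD hΓC)
    rw [hrep] at this
    rw [hsum, hβdef, hc]
    linarith
  refine ⟨α, β, c, hβ, hαβne, hpos, ?_⟩
  -- value of the integral for μ ∈ MC
  have hvalμ : ∀ μ ∈ MC n m f g S φ,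
      ∫ x, ((∑ i, α i * f x i) + β * g x + c) ∂μ =
        (∑ i, α i * φ i) + β * (∫ x, g x ∂μ) + c := by
    rintro μ ⟨hprob, hsupp, hfi, hfeq, hgi⟩
    have hint1 : Integrable (fun x => ∑ i, α i * f x i) μ :=
      integrable_finset_sum _ fun i _ => (hfi i).const_mul _
    have hint2 : Integrable (fun x => β * g x) μ := hgi.const_mul _
    have e1 : ∫ x, ((∑ i, α i * f x i) + β * g x + c) ∂μ =
        (∫ x, ((∑ i, α i * f x i) + β * g x) ∂μ) + ∫ _x, c ∂μ :=
      integral_add (hint1.add hint2) (integrable_const c)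
    have e2 : ∫ x, ((∑ i, α i * f x i) + β * g x) ∂μ =
        (∫ x, (∑ i, α i * f x i) ∂μ) + ∫ x, β * g x ∂μ :=
      integral_add hint1 hint2
    rw [e1, e2, integral_finset_sum _ fun i _ => (hfi i).const_mul _, integral_const]
    simp only [probReal_univ, smul_eq_mul, one_mul]
    congr 1
    congr 1
    · exact Finset.sum_congr rfl fun i _ => by rw [integral_const_mul, hfeq i]
    · rw [integral_const_mul]
  -- lower bound 0
  have hnn : ∀ μ ∈ MC n m f g S φ,
      0 ≤ ∫ x, ((∑ i, α i * f x i) + β * g x + c) ∂μ := by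
    rintro μ ⟨hprob, hsupp, hfi, hfeq, hgi⟩
    have haeS : ∀ᵐ x ∂μ, x ∈ S := by
      have h0 : μ (msupport μ)ᶜ = 0 := msupport_compl_null μ
      have h1 : μ Sᶜ = 0 := measure_mono_null (compl_subset_compl.2 hsupp) h0
      rw [ae_iff]
      exact h1
    refine integral_nonneg_of_ae ?_
    filter_upwards [haeS] with x hx using hpos x hx
  -- approximation from above
  have hub : ∀ ε : ℝ, 0 < ε → ∃ μ ∈ MC n m f g S φ,
      ∫ x, ((∑ i, α i * f x i) + β * g x + c) ∂μ < ε := by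
    intro ε hε
    have hβ1 : (0:ℝ) < β + 1 := by linarith
    set ε' : ℝ := ε / (β + 1) with hε'
    have hε'pos : 0 < ε' := by positivity
    obtain ⟨p, hpG, hp2⟩ := happrox ε' hε'pos
    obtain ⟨μ, hprob, hsupp, hfi, hfeq, hgi, hgeq⟩ :=
      exists_measure f g hf hg S p hpG.1
    have hp1 : p.1 = φ := hpG.2
    have hμMC : μ ∈ MC n m f g S φ := ⟨hprob, hsupp, hfi,
      fun i => by rw [hfeq i, hp1], hgi⟩
    refine ⟨μ, hμMC, ?_⟩
    rw [hvalμ μ hμMC, hgeq]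
    have hval2 : (∑ i, α i * φ i) + β * p.2 + c = β * (p.2 - σm) := by
      rw [hsum, hcval, hβdef]
      ring
    rw [hval2]
    have hlbp := hlb p hpG
    have h1 : β * (p.2 - σm) ≤ β * ε' :=
      mul_le_mul_of_nonneg_left (by linarith) hβ
    have h2 : β * ε' < ε := by
      rw [hε', mul_div_assoc']
      rw [div_lt_iff₀ hβ1]
      nlinarith
    linarith
  -- conclusion
  refine le_antisymm ?_ ?_
  · by_contra h
    push_neg at h
    obtain ⟨r, hr1, hr2⟩ := EReal.exists_between_coe_real h
    have hrpos : 0 < r := EReal.coe_pos.1 hr1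
    obtain ⟨μ, hμMC, hμval⟩ := hub r hrpos
    have h3 : (⨅ μ ∈ MC n m f g S φ,
        ((∫ x, ((∑ i, α i * f x i) + β * g x + c) ∂μ : ℝ) : EReal)) ≤
        ((∫ x, ((∑ i, α i * f x i) + β * g x + c) ∂μ : ℝ) : EReal) :=
      iInf₂_le μ hμMC
    have h4 : ((∫ x, ((∑ i, α i * f x i) + β * g x + c) ∂μ : ℝ) : EReal) < (r : EReal) :=
      EReal.coe_lt_coe_iff.2 hμval
    exact absurd (lt_of_le_of_lt (le_trans h3 h4.le) hr2) (lt_irrefl _)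
  · refine le_iInf₂ fun μ hμ => ?_
    exact EReal.coe_nonneg.2 (hnn μ hμ)
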